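/- For every n ≥ 1 and all x ∈ [0,∞)^n, H_{n,(2,2,2,2)}(x) ≥ H_{n,(3,1,1,1,1,1)}(x); that is, (h_{n,2}(x))^4 / C(n+1,2)^4 ≥ h_{n,3}(x) · (h_{n,1}(x))^5 / (C(n+2,3) · n^5). -/

import Mathlib

set_option maxHeartbeats 1000000

/-- The complete homogeneous symmetric polynomial `h_{n,k}`, as a function on `ℝ^n`:
the sum of all monomials of total degree `k` in `x 0, …, x (n-1)` (with `h_{n,0} = 1`). -/
noncomputable def hsym (n k : ℕ) (x : Fin n → ℝ) : ℝ :=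
  ∑ d ∈ Finset.Nat.antidiagonalTuple n k, ∏ i, x i ^ d i

lemma hsym_zero (n : ℕ) (x : Fin n → ℝ) : hsym n 0 x = 1 := by
  simp [hsym, Finset.Nat.antidiagonalTuple_zero_right]

lemma hsym_zero_vars (k : ℕ) (x : Fin 0 → ℝ) : hsym 0 (k + 1) x = 0 := by
  simp [hsym, Finset.Nat.antidiagonalTuple_zero_succ]

lemma hsym_succ (n k : ℕ) (x : Fin (n + 1) → ℝ) :
    hsym (n + 1) k x =
      ∑ j ∈ Finset.range (k + 1), x 0 ^ j * hsym n (k - j) (fun i => x i.succ) := by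
  unfold hsym
  simp only [Finset.mul_sum]
  rw [Finset.sum_sigma' (Finset.range (k + 1))
      (fun j => Finset.Nat.antidiagonalTuple n (k - j))
      (fun j d => x 0 ^ j * ∏ i, (x i.succ) ^ d i)]
  refine Finset.sum_nbij' (s := Finset.Nat.antidiagonalTuple (n+1) k)
      (t := (Finset.range (k + 1)).sigma fun j => Finset.Nat.antidiagonalTuple n (k - j))
      (f := fun d => ∏ i, x i ^ d i)
      (g := fun p => x 0 ^ p.1 * ∏ i, (x i.succ) ^ p.2 i)
      (fun d : Fin (n+1) → ℕ => (⟨d 0, Fin.tail d⟩ : Σ _j : ℕ, Fin n → ℕ))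
      (fun p : Σ _j : ℕ, Fin n → ℕ => Fin.cons p.1 p.2) ?_ ?_ ?_ ?_ ?_
  · intro d hd
    rw [Finset.Nat.mem_antidiagonalTuple, Fin.sum_univ_succ] at hd
    simp only [Finset.mem_sigma, Finset.mem_range, Finset.Nat.mem_antidiagonalTuple, Fin.tail]
    omega
  · rintro ⟨j, d⟩ hp
    rw [Finset.mem_sigma, Finset.mem_range, Finset.Nat.mem_antidiagonalTuple] at hp
    rw [Finset.Nat.mem_antidiagonalTuple, Fin.sum_univ_succ]
    simp only [Fin.cons_zero, Fin.cons_succ]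
    obtain ⟨h1, h2⟩ := hp
    dsimp only at h1 h2 ⊢
    omega
  · intro d _; exact Fin.cons_self_tail d
  · rintro ⟨j, d⟩ _; simp [Fin.tail_cons]
  · intro d _
    show ∏ i : Fin (n+1), x i ^ d i = x 0 ^ d 0 * ∏ i : Fin n, x i.succ ^ Fin.tail d i
    rw [Fin.prod_univ_succ]
    rfl

lemma hsym_one (n : ℕ) (x : Fin n → ℝ) : hsym n 1 x = ∑ i, x i := by
  induction n with
  | zero => simp [hsym, Finset.Nat.antidiagonalTuple_zero_succ]
  | succ m ih =>
    rw [hsym_succ, Fin.sum_univ_succ, Finset.sum_range_succ, Finset.sum_range_succ,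
      Finset.sum_range_zero, ih, hsym_zero]
    ring

lemma hsym_two (n : ℕ) (x : Fin n → ℝ) :
    2 * hsym n 2 x = (∑ i, x i) ^ 2 + ∑ i, x i ^ 2 := by
  induction n with
  | zero => simp [hsym, Finset.Nat.antidiagonalTuple_zero_succ]
  | succ m ih =>
    rw [hsym_succ]
    rw [Finset.sum_range_succ, Finset.sum_range_succ, Finset.sum_range_succ,
      Finset.sum_range_zero, hsym_zero, hsym_one]
    rw [Fin.sum_univ_succ (f := x), Fin.sum_univ_succ (f := fun i => x i ^ 2)]
    norm_num
    linear_combination ih (fun i => x i.succ)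

lemma hsym_three (n : ℕ) (x : Fin n → ℝ) :
    6 * hsym n 3 x =
      (∑ i, x i) ^ 3 + 3 * (∑ i, x i) * (∑ i, x i ^ 2) + 2 * ∑ i, x i ^ 3 := by
  induction n with
  | zero => simp [hsym, Finset.Nat.antidiagonalTuple_zero_succ]
  | succ m ih =>
    rw [hsym_succ]
    rw [Finset.sum_range_succ, Finset.sum_range_succ, Finset.sum_range_succ,
      Finset.sum_range_succ, Finset.sum_range_zero, hsym_zero, hsym_one]
    rw [Fin.sum_univ_succ (f := x), Fin.sum_univ_succ (f := fun i => x i ^ 2),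
      Fin.sum_univ_succ (f := fun i => x i ^ 3)]
    have h2 := hsym_two m (fun i => x i.succ)
    norm_num
    linear_combination ih (fun i => x i.succ) + 3 * x 0 * h2


lemma choose_two (n : ℕ) : 2 * ((n+1).choose 2) = n * (n+1) := by
  induction n with
  | zero => rfl
  | succ m ih =>
    have h : (m+2).choose 2 = (m+1).choose 1 + (m+1).choose 2 := Nat.choose_succ_succ (m+1) 1
    have h1 : (m+1).choose 1 = m+1 := Nat.choose_one_right _
    zify at ih ⊢
    rw [h, h1]
    push_cast
    linear_combination ih
  
lemma choose_three (n : ℕ) : 6 * ((n+2).choose 3) = n * (n+1) * (n+2) := by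
  induction n with
  | zero => rfl
  | succ m ih =>
    have h : (m+3).choose 3 = (m+2).choose 2 + (m+2).choose 3 := Nat.choose_succ_succ (m+2) 2
    have h2 := choose_two (m+1)
    zify at ih h2 ⊢
    rw [h]
    push_cast
    linear_combination ih + 3 * h2


lemma key_ineq (N a Q2 Q3 : ℝ) (hN : 1 ≤ N) (ha : 0 ≤ a) (hQ2 : 0 ≤ Q2)
    (hQ3 : Q3 ≤ 0 ∨ Q3 ^ 2 ≤ N * Q2 ^ 3) :
    (N+1)^3 * a^5 * ((N+1)*(N+2)*a^3 + 3*(N+2)*a*Q2 + 2*Q3)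
      ≤ (N+2) * ((N+1)*a^2 + Q2)^4 := by
  have hN0 : (0:ℝ) < N := by linarith
  set T1 : ℝ := (N+2)*(N+1)^3*a^6*Q2 with hT1def
  set T2 : ℝ := 6*(N+2)*(N+1)^2*a^4*Q2^2 with hT2def
  have hT1 : 0 ≤ T1 := by positivity
  have hT2 : 0 ≤ T2 := by positivity
  have hp3 : 0 ≤ 4*(N+2)*(N+1)*a^2*Q2^3 := by positivity
  have hp4 : 0 ≤ (N+2)*Q2^4 := by positivity
  have hx : 2*(N+1)^3*a^5*Q3 ≤ T1 + T2 := by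
    rcases hQ3 with h | h
    · have h5 : 0 ≤ a^5 := by positivity
      nlinarith [mul_nonneg h5 (neg_nonneg.mpr h), pow_pos (by linarith : (0:ℝ) < N+1) 3]
    · have e2 : 4*(N+1)^6*a^10*Q3^2 ≤ 4*(N+1)^6*a^10*(N*Q2^3) := by
        have : (0:ℝ) ≤ 4*(N+1)^6*a^10 := by positivity
        exact mul_le_mul_of_nonneg_left h this
      have e3 : 4*(N+1)^6*a^10*(N*Q2^3) ≤ 4*(T1*T2) := by
        have h6 : 0 ≤ 6*(N+2)^2 - N*(N+1) := by nlinarith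
        have hpos : 0 ≤ (N+1)^5 * a^10 * Q2^3 := by positivity
        nlinarith [mul_nonneg h6 hpos]
      have hx2 : (2*(N+1)^3*a^5*Q3)^2 ≤ (T1+T2)^2 := by
        nlinarith [sq_nonneg (T1 - T2), e2, e3]
      nlinarith [hx2, hT1, hT2, sq_nonneg (T1 + T2 + 2*(N+1)^3*a^5*Q3)]
  nlinarith [hx, hp3, hp4]

/-- Degree 8 case: for every `n ≥ 1`, `H_{n,(2,2,2,2)} ≥ H_{n,(3,1,1,1,1,1)}` on
`[0,∞)^n`: explicitly, `h_{n,2}^4 / C(n+1,2)^4 ≥ h_{n,3}·h_{n,1}^5 / (C(n+2,3)·n^5)`. -/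
theorem H_2222_ge_H_311111 (n : ℕ) (hn : 1 ≤ n)
    (x : Fin n → ℝ) (hx : ∀ i, 0 ≤ x i) :
    hsym n 3 x * (hsym n 1 x) ^ 5 / (((n + 2).choose 3 : ℝ) * (n : ℝ) ^ 5) ≤
      (hsym n 2 x) ^ 4 / (((n + 1).choose 2 : ℝ)) ^ 4 := by
  set N : ℝ := (n : ℝ) with hNdef
  have hN : (1:ℝ) ≤ N := by rw [hNdef]; exact_mod_cast hn
  have hN0 : (0:ℝ) < N := by linarith
  set a : ℝ := ∑ i, x i with hadef
  set b : ℝ := ∑ i, x i ^ 2 with hbdef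
  set c : ℝ := ∑ i, x i ^ 3 with hcdef
  have ha : 0 ≤ a := Finset.sum_nonneg fun i _ => hx i
  have E1 : hsym n 1 x = a := hsym_one n x
  have E2 : hsym n 2 x = (a^2 + b) / 2 := by linarith [hsym_two n x]
  have E3 : hsym n 3 x = (a^3 + 3*a*b + 2*c) / 6 := by linarith [hsym_three n x]
  have hc2 : (((n + 1).choose 2 : ℕ) : ℝ) = N * (N+1) / 2 := by
    have := choose_two n
    have : ((2 * ((n+1).choose 2) : ℕ) : ℝ) = ((n * (n+1) : ℕ) : ℝ) := by rw [this]
    push_cast at this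
    linarith
  have hc3 : (((n + 2).choose 3 : ℕ) : ℝ) = N * (N+1) * (N+2) / 6 := by
    have := choose_three n
    have : ((6 * ((n+2).choose 3) : ℕ) : ℝ) = ((n * (n+1) * (n+2) : ℕ) : ℝ) := by rw [this]
    push_cast at this
    linarith
  -- power sum identities for centered variables
  set Q2 : ℝ := N * b - a^2 with hQ2def
  set Q3 : ℝ := N^2 * c - 3*N*a*b + 2*a^3 with hQ3def
  have hcard : ∑ _i : Fin n, (1:ℝ) = N := by simp [hNdef]
  have hy2 : ∑ i, (N * x i - a)^2 = N * Q2 := by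
    have h := Finset.sum_congr rfl
      (fun i (_ : i ∈ (Finset.univ : Finset (Fin n))) =>
        (by ring : (N * x i - a)^2 = N^2 * x i^2 - (2*N*a) * x i + a^2 * 1))
    rw [h, Finset.sum_add_distrib, Finset.sum_sub_distrib, ← Finset.mul_sum, ← Finset.mul_sum,
      ← Finset.mul_sum, hcard, ← hadef, ← hbdef, hQ2def]
    ring
  have hy3 : ∑ i, (N * x i - a)^3 = N * Q3 := by
    have h := Finset.sum_congr rfl
      (fun i (_ : i ∈ (Finset.univ : Finset (Fin n))) =>
        (by ring : (N * x i - a)^3 =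
          N^3 * x i^3 - (3*N^2*a) * x i^2 + (3*N*a^2) * x i - a^3 * 1))
    rw [h, Finset.sum_sub_distrib, Finset.sum_add_distrib, Finset.sum_sub_distrib,
      ← Finset.mul_sum, ← Finset.mul_sum, ← Finset.mul_sum, ← Finset.mul_sum,
      hcard, ← hadef, ← hbdef, ← hcdef, hQ3def]
    ring
  have hsum2nn : 0 ≤ ∑ i, (N * x i - a)^2 := Finset.sum_nonneg fun i _ => sq_nonneg _
  have hQ2 : 0 ≤ Q2 := by
    rw [hy2] at hsum2nn
    by_contra h
    push_neg at h
    nlinarith [mul_nonneg (by linarith : (0:ℝ) ≤ N - 1) (by linarith : (0:ℝ) ≤ -Q2)]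
  -- bound Q3
  set s : ℝ := Real.sqrt (N * Q2) with hsdef
  have hsnn : 0 ≤ s := Real.sqrt_nonneg _
  have hs2 : s^2 = N * Q2 := Real.sq_sqrt (by positivity)
  have hyle : ∀ i, N * x i - a ≤ s := by
    intro i
    have h1 : (N * x i - a)^2 ≤ N * Q2 := by
      rw [← hy2]
      exact Finset.single_le_sum (f := fun i => (N * x i - a)^2)
        (fun j _ => sq_nonneg _) (Finset.mem_univ i)
    nlinarith [sq_nonneg (N * x i - a - s), sq_nonneg (N * x i - a + s)]
  have hsum3 : ∑ i, (N * x i - a)^3 ≤ (∑ i, (N * x i - a)^2) * s := by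
    rw [Finset.sum_mul]
    refine Finset.sum_le_sum fun i _ => ?_
    have h1 := hyle i
    calc (N * x i - a)^3 = (N * x i - a)^2 * (N * x i - a) := by ring
      _ ≤ (N * x i - a)^2 * s := mul_le_mul_of_nonneg_left h1 (sq_nonneg _)
  have hQ3s : Q3 ≤ Q2 * s := by
    rw [hy3, hy2] at hsum3
    by_contra h
    push_neg at h
    nlinarith [mul_nonneg (by linarith : (0:ℝ) ≤ N - 1) (by linarith : (0:ℝ) ≤ Q3 - Q2 * s)]
  have hQ3 : Q3 ≤ 0 ∨ Q3 ^ 2 ≤ N * Q2 ^ 3 := by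
    rcases le_or_gt Q3 0 with h | h
    · exact Or.inl h
    · right
      have h1 : Q3^2 ≤ (Q2*s)^2 := pow_le_pow_left₀ h.le hQ3s 2
      have h2 : (Q2*s)^2 = N * Q2^3 := by rw [mul_pow, hs2]; ring
      linarith
  have hkey := key_ineq N a Q2 Q3 hN ha hQ2 hQ3
  have star : (N+1)^3 * (a^3 + 3*a*b + 2*c) * a^5 ≤ N^2 * (N+2) * (a^2 + b)^4 := by
    have l1 : (N+1)^3 * a^5 * ((N+1)*(N+2)*a^3 + 3*(N+2)*a*Q2 + 2*Q3)
        = N^2 * ((N+1)^3 * (a^3 + 3*a*b + 2*c) * a^5) := by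
      rw [hQ2def, hQ3def]; ring
    have l2 : (N+2) * ((N+1)*a^2 + Q2)^4 = N^2 * (N^2 * (N+2) * (a^2 + b)^4) := by
      rw [hQ2def]; ring
    rw [l1, l2] at hkey
    exact le_of_mul_le_mul_left hkey (by positivity)
  rw [E1, E2, E3, hc2, hc3]
  rw [div_le_div_iff₀ (by positivity) (by positivity)]
  nlinarith [mul_nonneg (sub_nonneg.2 star) (le_of_lt (mul_pos (pow_pos hN0 4) (by linarith : (0:ℝ) < N + 1)))]
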